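/- Let φ, σ be real numbers with |φ| < 1 and σ > 0, let m > 1 be an integer, and let 0 < z₁ ≤ z₂ < m. Let Φ be the m×m lower-triangular matrix with Φ_{ij} = φ^{i−j} for i ≥ j and 0 otherwise, and u_z ∈ ℝ^m with (u_z)_j = 1 for j ≤ m−z and 0 otherwise. Then σ² u_{z₂}ᵀΦΦᵀu_{z₂} + (σ²/(1−φ²)) Σ_{j=1}^{m−z₂} (1 − φ^{2j}) ≤ σ² u_{z₁}ᵀΦΦᵀu_{z₁} + (σ²/(1−φ²)) Σ_{j=1}^{m−z₁} (1 − φ^{2j}); that is, every additional step of new information results in an overall lower total MSE of the updated and reconciled forecasts. -/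

import Mathlib

open Matrix

private lemma quad_sq' {m : ℕ} (M : Matrix (Fin m) (Fin m) ℝ) (v : Fin m → ℝ) :
    v ⬝ᵥ (M * Mᵀ).mulVec v = ∑ l, (Mᵀ.mulVec v l) ^ 2 := by
  rw [← Matrix.mulVec_mulVec, Matrix.dotProduct_mulVec, ← Matrix.mulVec_transpose]
  simp [dotProduct, sq]

private lemma row_sum' (φ : ℝ) (m k : ℕ) (hk : k ≤ m) (l : Fin m) :
    (∑ j : Fin m, (if (l:ℕ) ≤ (j:ℕ) then φ ^ ((j:ℕ) - (l:ℕ)) else 0) *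
        (if (j:ℕ) < k then 1 else 0)) =
      if (l:ℕ) < k then ∑ t ∈ Finset.range (k - l), φ ^ t else 0 := by
  rw [Fin.sum_univ_eq_sum_range (fun j => (if (l:ℕ) ≤ j then φ ^ (j - (l:ℕ)) else 0) *
      (if j < k then 1 else 0))]
  have h1 : ∀ j, (if (l:ℕ) ≤ j then φ ^ (j - (l:ℕ)) else 0) * (if j < k then 1 else 0)
      = if j ∈ Finset.Ico (l:ℕ) k then φ ^ (j - (l:ℕ)) else 0 := by
    intro j
    by_cases h1 : (l:ℕ) ≤ j <;> by_cases h2 : j < k <;>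
      simp [h1, h2, Finset.mem_Ico]
  simp only [h1]
  rw [← Finset.sum_filter]
  have h2 : Finset.filter (fun j => j ∈ Finset.Ico (l:ℕ) k) (Finset.range m)
      = Finset.Ico (l:ℕ) k := by
    ext j
    simp only [Finset.mem_filter, Finset.mem_range, Finset.mem_Ico]
    constructor
    · exact fun h => h.2
    · exact fun h => ⟨lt_of_lt_of_le h.2 hk, h⟩
  rw [h2, Finset.sum_Ico_eq_sum_range]
  by_cases hl : (l:ℕ) < k
  · simp only [hl, if_true]
    exact Finset.sum_congr rfl (fun t _ => by rw [Nat.add_sub_cancel_left])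
  · simp [Nat.sub_eq_zero_of_le (le_of_not_gt hl), hl]

/-- The total MSE as an explicit sum of `m - z` nonnegative-style terms. -/
private lemma total_eq' (φ σ : ℝ) (m : ℕ)
    (Φ : Matrix (Fin m) (Fin m) ℝ)
    (hΦ : Φ = Matrix.of fun (i j : Fin m) =>
      if (j : ℕ) ≤ (i : ℕ) then φ ^ ((i : ℕ) - (j : ℕ)) else 0)
    (u : ℕ → Fin m → ℝ)
    (hu : ∀ w, u w = fun (j : Fin m) => if (j : ℕ) < m - w then 1 else 0)
    (z : ℕ) :
    σ ^ 2 * (u z ⬝ᵥ (Φ * Φᵀ).mulVec (u z)) +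
        σ ^ 2 / (1 - φ ^ 2) * ∑ j ∈ Finset.Icc 1 (m - z), (1 - φ ^ (2 * j)) =
      ∑ r ∈ Finset.range (m - z),
        (σ ^ 2 * (∑ t ∈ Finset.range (r + 1), φ ^ t) ^ 2 +
          σ ^ 2 / (1 - φ ^ 2) * (1 - φ ^ (2 * (r + 1)))) := by
  set k := m - z with hkdef
  have hk : k ≤ m := Nat.sub_le m z
  -- quadratic form
  have hquad : u z ⬝ᵥ (Φ * Φᵀ).mulVec (u z)
      = ∑ r ∈ Finset.range k, (∑ t ∈ Finset.range (r + 1), φ ^ t) ^ 2 := by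
    rw [quad_sq']
    have hw : ∀ l : Fin m, Φᵀ.mulVec (u z) l
        = if (l:ℕ) < k then ∑ t ∈ Finset.range (k - l), φ ^ t else 0 := by
      intro l
      rw [← row_sum' φ m k hk l]
      simp only [Matrix.mulVec, dotProduct, Matrix.transpose_apply, hΦ, hu,
        Matrix.of_apply]
      rfl
    simp only [hw]
    have hsq : ∀ l : Fin m,
        (if (l:ℕ) < k then ∑ t ∈ Finset.range (k - l), φ ^ t else 0) ^ 2
        = if (l:ℕ) < k then (∑ t ∈ Finset.range (k - (l:ℕ)), φ ^ t) ^ 2 else 0 := by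
      intro l; by_cases h : (l:ℕ) < k <;> simp [h]
    simp only [hsq]
    rw [Fin.sum_univ_eq_sum_range
      (fun l => if l < k then (∑ t ∈ Finset.range (k - l), φ ^ t) ^ 2 else 0)]
    rw [← Finset.sum_filter]
    have h3 : Finset.filter (fun l => l < k) (Finset.range m) = Finset.range k := by
      ext l
      simp only [Finset.mem_filter, Finset.mem_range]
      exact ⟨fun h => h.2, fun h => ⟨lt_of_lt_of_le h hk, h⟩⟩
    rw [h3]
    rw [← Finset.sum_range_reflect (fun r => (∑ t ∈ Finset.range (r + 1), φ ^ t) ^ 2) k]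
    apply Finset.sum_congr rfl
    intro l hl
    rw [Finset.mem_range] at hl
    have : k - (l:ℕ) = k - 1 - l + 1 := by omega
    rw [this]
  -- Icc sum
  have hicc : ∑ j ∈ Finset.Icc 1 k, (1 - φ ^ (2 * j))
      = ∑ r ∈ Finset.range k, (1 - φ ^ (2 * (r + 1))) := by
    have : Finset.Icc 1 k = Finset.Ico 1 (k + 1) := by
      rw [Finset.Ico_add_one_right_eq_Icc]
    rw [this, Finset.sum_Ico_eq_sum_range]
    simp only [Nat.add_sub_cancel]
    apply Finset.sum_congr rfl
    intro r _
    rw [Nat.add_comm 1 r]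
  rw [hquad, hicc, Finset.mul_sum, Finset.mul_sum, ← Finset.sum_add_distrib]

/-- Corollary 2 for K = {m, 1} with a bottom-level stationary AR(1): every
additional step of new information results in an overall lower total MSE of the
updated and reconciled forecasts. -/
theorem ar1_total_mse_antitone_in_new_data (φ σ : ℝ) (hφ : |φ| < 1) (hσ : 0 < σ)
    (m z₁ z₂ : ℕ) (hm : 1 < m) (hz₁ : 0 < z₁) (h12 : z₁ ≤ z₂) (hz₂ : z₂ < m)
    (Φ : Matrix (Fin m) (Fin m) ℝ)
    (hΦ : Φ = Matrix.of fun (i j : Fin m) =>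
      if (j : ℕ) ≤ (i : ℕ) then φ ^ ((i : ℕ) - (j : ℕ)) else 0)
    (u : ℕ → Fin m → ℝ)
    (hu : ∀ w, u w = fun (j : Fin m) => if (j : ℕ) < m - w then 1 else 0) :
    σ ^ 2 * (u z₂ ⬝ᵥ (Φ * Φᵀ).mulVec (u z₂)) +
        σ ^ 2 / (1 - φ ^ 2) * ∑ j ∈ Finset.Icc 1 (m - z₂), (1 - φ ^ (2 * j)) ≤
      σ ^ 2 * (u z₁ ⬝ᵥ (Φ * Φᵀ).mulVec (u z₁)) +
        σ ^ 2 / (1 - φ ^ 2) * ∑ j ∈ Finset.Icc 1 (m - z₁), (1 - φ ^ (2 * j)) := by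
  rw [total_eq' φ σ m Φ hΦ u hu z₁, total_eq' φ σ m Φ hΦ u hu z₂]
  have hsub : Finset.range (m - z₂) ⊆ Finset.range (m - z₁) :=
    Finset.range_subset_range.mpr (Nat.sub_le_sub_left h12 m)
  apply Finset.sum_le_sum_of_subset_of_nonneg hsub
  intro r _ _
  have hφ2 : φ ^ 2 < 1 := by
    rw [← sq_abs]
    exact pow_lt_one₀ (abs_nonneg φ) hφ two_ne_zero
  have h1 : (0:ℝ) ≤ σ ^ 2 * (∑ t ∈ Finset.range (r + 1), φ ^ t) ^ 2 :=
    mul_nonneg (sq_nonneg σ) (sq_nonneg _)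
  have h2 : (0:ℝ) ≤ σ ^ 2 / (1 - φ ^ 2) * (1 - φ ^ (2 * (r + 1))) := by
    apply mul_nonneg
    · exact div_nonneg (sq_nonneg σ) (by linarith)
    · have : φ ^ (2 * (r + 1)) = (φ ^ 2) ^ (r + 1) := by rw [← pow_mul]
      rw [this]
      have hle : (φ ^ 2) ^ (r + 1) ≤ 1 :=
        pow_le_one₀ (sq_nonneg φ) (le_of_lt hφ2)
      linarith
  linarith
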